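/- arXiv:1205.4643 — 2 statements merged into one kernel-verified Lean document; each statement's English description precedes it below -/
import Mathlib

section
/- Let (Z⁰, Z¹) be a λ-consistent price system: a pair of strictly positive martingales with (1−λ)S_t ≤ Z¹_t/Z⁰_t ≤ S_t for all t. Then for every strategy (φ⁰, φ¹) that is self-financing under transaction costs λ (for S), the process (Z⁰_t φ⁰_{t+1} + Z¹_t φ¹_{t+1})_{t=0}^T is a supermartingale provided it is nonnegative. -/
open MeasureTheory


private lemma stmt10_aux (l z0 z1 s a b : ℝ) (hz0 : 0 < z0) (h2 : z1 ≤ z0 * s)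
    (h3 : z0 * ((1 - l) * s) ≤ z1) (h4 : a ≤ -b⁺ * s + b⁻ * ((1 - l) * s)) :
    z0 * a + z1 * b ≤ 0 := by
  have hbp : (0:ℝ) ≤ b⁺ := posPart_nonneg b
  have hbn : (0:ℝ) ≤ b⁻ := negPart_nonneg b
  set p := b⁺ with hp
  set q := b⁻ with hq
  have hb : p - q = b := posPart_sub_negPart b
  rw [← hb]
  nlinarith [mul_le_mul_of_nonneg_left h4 hz0.le,
    mul_nonneg hbp (sub_nonneg.2 h2), mul_nonneg hbn (sub_nonneg.2 h3)]

/-- For a λ-consistent price system `(Z⁰, Z¹)` and a self-financing strategy under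
transaction costs, the nonnegative valued process `Z⁰_t φ⁰_{t+1} + Z¹_t φ¹_{t+1}` is a
supermartingale. -/
theorem stmt_10 {Ω : Type*} {m0 : MeasurableSpace Ω} {μ : Measure Ω} [IsProbabilityMeasure μ]
    (ℱ : Filtration ℕ m0) (T : ℕ) (l : ℝ) (hl : l ∈ Set.Ioo (0 : ℝ) 1)
    (S Z0 Z1 : ℕ → Ω → ℝ) (φ0 φ1 : ℕ → Ω → ℝ)
    (hZ0 : Martingale Z0 ℱ μ) (hZ1 : Martingale Z1 ℱ μ)
    (hZ0pos : ∀ t ω, 0 < Z0 t ω) (hZ1pos : ∀ t ω, 0 < Z1 t ω)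
    (hspread : ∀ t ≤ T, ∀ ω, (1 - l) * S t ω ≤ Z1 t ω / Z0 t ω ∧ Z1 t ω / Z0 t ω ≤ S t ω)
    (hpred : ∀ t, StronglyMeasurable[ℱ t] (φ0 (t + 1)) ∧ StronglyMeasurable[ℱ t] (φ1 (t + 1)))
    (hsf : ∀ t ≤ T, ∀ ω, φ0 (t + 1) ω - φ0 t ω ≤
        -(φ1 (t + 1) ω - φ1 t ω)⁺ * S t ω + (φ1 (t + 1) ω - φ1 t ω)⁻ * ((1 - l) * S t ω))
    (hnonneg : ∀ t ω, 0 ≤ Z0 t ω * φ0 (t + 1) ω + Z1 t ω * φ1 (t + 1) ω)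
    (hint : ∀ t, Integrable (fun ω => Z0 t ω * φ0 (t + 1) ω + Z1 t ω * φ1 (t + 1) ω) μ) :
    Supermartingale (fun t ω => Z0 (min t T) ω * φ0 (min t T + 1) ω +
      Z1 (min t T) ω * φ1 (min t T + 1) ω) ℱ μ := by
  set V : ℕ → Ω → ℝ := fun t ω => Z0 t ω * φ0 (t + 1) ω + Z1 t ω * φ1 (t + 1) ω with hVdef
  have hVint : ∀ t, Integrable (V t) μ := hint
  have hVmeas : ∀ t, StronglyMeasurable[ℱ t] (V t) := fun t =>
    ((hZ0.stronglyAdapted t).mul (hpred t).1).add ((hZ1.stronglyAdapted t).mul (hpred t).2)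
  refine supermartingale_nat (fun t => (hVmeas (min t T)).mono (ℱ.mono (min_le_left t T)))
    (fun t => hVint (min t T)) ?_
  intro t
  by_cases ht : t < T
  · have h1 : min t T = t := min_eq_left ht.le
    have h2 : min (t + 1) T = t + 1 := min_eq_left ht
    simp only [h1, h2]
    have ht1 : t + 1 ≤ T := ht
    -- pointwise inequality
    have hpt : ∀ ω, V (t + 1) ω ≤ V t ω + (φ0 (t + 1) ω * (Z0 (t + 1) ω - Z0 t ω)
        + φ1 (t + 1) ω * (Z1 (t + 1) ω - Z1 t ω)) := by
      intro ω
      have hsf' := hsf (t + 1) ht1 ω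
      obtain ⟨hs1, hs2⟩ := hspread (t + 1) ht1 ω
      have hz0 := hZ0pos (t + 1) ω
      have hz1le : Z1 (t + 1) ω ≤ Z0 (t + 1) ω * S (t + 1) ω := by
        rw [div_le_iff₀ hz0] at hs2; linarith [hs2]
      have hz1ge : Z0 (t + 1) ω * ((1 - l) * S (t + 1) ω) ≤ Z1 (t + 1) ω := by
        rw [le_div_iff₀ hz0] at hs1; linarith [hs1]
      have key := stmt10_aux l (Z0 (t + 1) ω) (Z1 (t + 1) ω) (S (t + 1) ω)
        (φ0 (t + 1 + 1) ω - φ0 (t + 1) ω) (φ1 (t + 1 + 1) ω - φ1 (t + 1) ω)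
        hz0 hz1le hz1ge hsf'
      simp only [hVdef]
      linarith [key]
    -- truncation sets
    set A : ℕ → Set Ω := fun n => {ω | |φ0 (t + 1) ω| ≤ n} ∩ {ω | |φ1 (t + 1) ω| ≤ n} with hAdef
    have hA : ∀ n, MeasurableSet[ℱ t] (A n) := by
      intro n
      have h0 : Measurable[ℱ t] (φ0 (t + 1)) := (hpred t).1.measurable
      have h1 : Measurable[ℱ t] (φ1 (t + 1)) := (hpred t).2.measurable
      have hset : ∀ f : Ω → ℝ, {ω | |f ω| ≤ (n:ℝ)} = f ⁻¹' Set.Icc (-(n:ℝ)) n := by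
        intro f; ext ω; simp [abs_le, Set.mem_Icc]
      simp only [hAdef, hset]
      exact (h0 measurableSet_Icc).inter (h1 measurableSet_Icc)
    have key : ∀ n : ℕ, (A n).indicator (μ[V (t + 1)|ℱ t]) ≤ᵐ[μ] (A n).indicator (V t) := by
      intro n
      set χ0 : Ω → ℝ := (A n).indicator (φ0 (t + 1)) with hχ0
      set χ1 : Ω → ℝ := (A n).indicator (φ1 (t + 1)) with hχ1
      set D0 : Ω → ℝ := fun ω => Z0 (t + 1) ω - Z0 t ω with hD0
      set D1 : Ω → ℝ := fun ω => Z1 (t + 1) ω - Z1 t ω with hD1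
      have hD0int : Integrable D0 μ := (hZ0.integrable (t + 1)).sub (hZ0.integrable t)
      have hD1int : Integrable D1 μ := (hZ1.integrable (t + 1)).sub (hZ1.integrable t)
      have hχ0m : StronglyMeasurable[ℱ t] χ0 := (hpred t).1.indicator (hA n)
      have hχ1m : StronglyMeasurable[ℱ t] χ1 := (hpred t).2.indicator (hA n)
      have hχ0b : ∀ ω, |χ0 ω| ≤ n := by
        intro ω; by_cases h : ω ∈ A n
        · rw [hχ0, Set.indicator_of_mem h]; exact h.1
        · rw [hχ0, Set.indicator_of_notMem h]; simp
      have hχ1b : ∀ ω, |χ1 ω| ≤ n := by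
        intro ω; by_cases h : ω ∈ A n
        · rw [hχ1, Set.indicator_of_mem h]; exact h.2
        · rw [hχ1, Set.indicator_of_notMem h]; simp
      have hprod0 : Integrable (χ0 * D0) μ := by
        refine Integrable.mono' (hD0int.norm.const_mul n)
          ((hχ0m.mono (ℱ.le t)).aestronglyMeasurable.mul hD0int.1) (ae_of_all _ fun ω => ?_)
        simp only [Pi.mul_apply, norm_mul, Real.norm_eq_abs]
        exact mul_le_mul_of_nonneg_right (hχ0b ω) (abs_nonneg _)
      have hprod1 : Integrable (χ1 * D1) μ := by
        refine Integrable.mono' (hD1int.norm.const_mul n)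
          ((hχ1m.mono (ℱ.le t)).aestronglyMeasurable.mul hD1int.1) (ae_of_all _ fun ω => ?_)
        simp only [Pi.mul_apply, norm_mul, Real.norm_eq_abs]
        exact mul_le_mul_of_nonneg_right (hχ1b ω) (abs_nonneg _)
      have hindVt_int : Integrable ((A n).indicator (V t)) μ :=
        (hVint t).indicator (ℱ.le t _ (hA n))
      have hindVt1_int : Integrable ((A n).indicator (V (t + 1))) μ :=
        (hVint (t + 1)).indicator (ℱ.le t _ (hA n))
      -- pointwise: indicator (V (t+1)) ≤ indicator (V t) + χ0*D0 + χ1*D1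
      have hptA : ∀ ω, (A n).indicator (V (t + 1)) ω ≤
          ((A n).indicator (V t) + (χ0 * D0 + χ1 * D1)) ω := by
        intro ω
        by_cases h : ω ∈ A n
        · simp only [Pi.add_apply, Pi.mul_apply, hχ0, hχ1, Set.indicator_of_mem h]
          have := hpt ω
          simp only [hD0, hD1]
          linarith
        · simp only [Pi.add_apply, Pi.mul_apply, hχ0, hχ1, Set.indicator_of_notMem h]
          simp
      have hmono := condExp_mono (m := ℱ t) hindVt1_int
        (hindVt_int.add (hprod0.add hprod1)) (ae_of_all _ hptA)
      -- compute condexp of RHS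
      have hc1 : μ[(A n).indicator (V t)|ℱ t] = (A n).indicator (V t) :=
        condExp_of_stronglyMeasurable (ℱ.le t) ((hVmeas t).indicator (hA n)) hindVt_int
      have hD0cond : μ[D0|ℱ t] =ᵐ[μ] 0 := by
        refine (condExp_sub (hZ0.integrable (t + 1)) (hZ0.integrable t) _).trans ?_
        filter_upwards [hZ0.condExp_ae_eq (Nat.le_succ t),
          hZ0.condExp_ae_eq (le_refl t)] with ω h1 h2
        simp [h1, h2]
      have hD1cond : μ[D1|ℱ t] =ᵐ[μ] 0 := by
        refine (condExp_sub (hZ1.integrable (t + 1)) (hZ1.integrable t) _).trans ?_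
        filter_upwards [hZ1.condExp_ae_eq (Nat.le_succ t),
          hZ1.condExp_ae_eq (le_refl t)] with ω h1 h2
        simp [h1, h2]
      have hc2 : μ[χ0 * D0|ℱ t] =ᵐ[μ] 0 := by
        refine (condExp_mul_of_stronglyMeasurable_left hχ0m hprod0 hD0int).trans ?_
        filter_upwards [hD0cond] with ω h
        simp [Pi.mul_apply, h]
      have hc3 : μ[χ1 * D1|ℱ t] =ᵐ[μ] 0 := by
        refine (condExp_mul_of_stronglyMeasurable_left hχ1m hprod1 hD1int).trans ?_
        filter_upwards [hD1cond] with ω h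
        simp [Pi.mul_apply, h]
      have hcRHS : μ[(A n).indicator (V t) + (χ0 * D0 + χ1 * D1)|ℱ t]
          =ᵐ[μ] (A n).indicator (V t) := by
        refine (condExp_add hindVt_int (hprod0.add hprod1) _).trans ?_
        have hadd : μ[χ0 * D0 + χ1 * D1|ℱ t] =ᵐ[μ] μ[χ0 * D0|ℱ t] + μ[χ1 * D1|ℱ t] :=
          condExp_add hprod0 hprod1 _
        filter_upwards [hadd, hc2, hc3] with ω h h2 h3
        rw [hc1] at *
        simp only [Pi.add_apply] at *
        rw [h, h2, h3]
        simp
      have hLHS : μ[(A n).indicator (V (t + 1))|ℱ t]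
          =ᵐ[μ] (A n).indicator (μ[V (t + 1)|ℱ t]) :=
        condExp_indicator (hVint (t + 1)) (hA n)
      filter_upwards [hmono, hcRHS, hLHS] with ω h hr hli
      rw [← hli, ← hr]
      exact h
    -- pass to the limit in n
    have hall : ∀ᵐ ω ∂μ, ∀ n, (A n).indicator (μ[V (t + 1)|ℱ t]) ω ≤ (A n).indicator (V t) ω :=
      ae_all_iff.2 key
    filter_upwards [hall] with ω h
    obtain ⟨n, hn0, hn1⟩ : ∃ n : ℕ, |φ0 (t + 1) ω| ≤ n ∧ |φ1 (t + 1) ω| ≤ n := by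
      refine ⟨⌈max (|φ0 (t + 1) ω|) (|φ1 (t + 1) ω|)⌉₊, ?_, ?_⟩
      · exact le_trans (le_max_left _ _) (Nat.le_ceil _)
      · exact le_trans (le_max_right _ _) (Nat.le_ceil _)
    have hmem : ω ∈ A n := ⟨hn0, hn1⟩
    have := h n
    rwa [Set.indicator_of_mem hmem, Set.indicator_of_mem hmem] at this
  · push_neg at ht
    have h1 : min t T = T := min_eq_right ht
    have h2 : min (t + 1) T = T := min_eq_right (ht.trans (Nat.le_succ t))
    simp only [h1, h2]
    rw [condExp_of_stronglyMeasurable (ℱ.le t) ((hVmeas T).mono (ℱ.mono ht)) (hVint T)]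
end

section
/- Let λ ∈ (0,1) and n ∈ ℕ. For an investor with wealth w > 0 (cash plus shares valued at price S₁ = 1 + 1/n) and current holding φ¹ > 0, whose next-period bid price is 3 (= (1−λ)·3/(1−λ)) with probability p_{n,1} and 1 + 1/(n+1) with probability 1 − p_{n,1}, the log-optimal total risky holding equals w·((1+λ)/(λ + 1/n))·(1/(1+λ) + q₁/n), where p_{n,1} = (1 + n(2+n)λ)((2n−1)q₁(1+λ) + n²(2+λ))/(n²(1+nλ)(1+2λ+n(2+λ))). -/
set_option maxHeartbeats 1000000

/-- Generic two-point log-optimality from a first-order condition. -/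
lemma log_opt_aux (p a b w θs θ : ℝ) (hp : 0 ≤ p) (hp1 : p ≤ 1)
    (hY1 : 0 < w + θs * a) (hY2 : 0 < w + θs * b)
    (hfoc : p * a * (w + θs * b) + (1 - p) * b * (w + θs * a) = 0)
    (h1 : 0 < w + θ * a) (h2 : 0 < w + θ * b) :
    p * Real.log (w + θ * a) + (1 - p) * Real.log (w + θ * b) ≤
      p * Real.log (w + θs * a) + (1 - p) * Real.log (w + θs * b) := by
  have l1 : Real.log (w + θ * a) - Real.log (w + θs * a) ≤
      ((w + θ * a) - (w + θs * a)) / (w + θs * a) := by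
    have h := Real.log_le_sub_one_of_pos (div_pos h1 hY1)
    rw [Real.log_div h1.ne' hY1.ne'] at h
    rw [div_sub' hY1.ne', mul_one] at h
    linarith [h]
  have l2 : Real.log (w + θ * b) - Real.log (w + θs * b) ≤
      ((w + θ * b) - (w + θs * b)) / (w + θs * b) := by
    have h := Real.log_le_sub_one_of_pos (div_pos h2 hY2)
    rw [Real.log_div h2.ne' hY2.ne'] at h
    rw [div_sub' hY2.ne', mul_one] at h
    linarith [h]
  have key : p * (((w + θ * a) - (w + θs * a)) / (w + θs * a)) +
      (1 - p) * (((w + θ * b) - (w + θs * b)) / (w + θs * b)) = 0 := by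
    rw [mul_div_assoc', mul_div_assoc', div_add_div _ _ hY1.ne' hY2.ne', div_eq_zero_iff]
    exact Or.inl (by linear_combination (θ - θs) * hfoc)
  nlinarith [mul_le_mul_of_nonneg_left l1 hp, mul_le_mul_of_nonneg_left l2 (by linarith : (0:ℝ) ≤ 1 - p)]

/-- Second-period optimization at the node `ω_{n,·}`: with wealth `w > 0`, ask price
`S₁ = 1 + 1/n`, next-period bid prices `3` (probability `p_{n,1}`) and `(1−λ)(1+1/(n+1))`
(probability `1 − p_{n,1}`), the log-optimal total risky holding is
`w ((1+λ)/(λ+1/n)) (1/(1+λ) + q₁/n)`. -/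
theorem stmt_19 (l q₁ w φ1 : ℝ) (n : ℕ) (hn : 1 ≤ n)
    (hl : l ∈ Set.Ioo (0 : ℝ) 1)
    (hq : q₁ ∈ Set.Ioo (0 : ℝ) ((1 - l) / (1 + 4 * l + 3 * l ^ 2)))
    (hw : 0 < w) (hφ1 : 0 < φ1) :
    letI p : ℝ := (1 + (n : ℝ) * (2 + n) * l) * ((2 * n - 1) * q₁ * (1 + l) + n ^ 2 * (2 + l)) /
      ((n : ℝ) ^ 2 * (1 + n * l) * (1 + 2 * l + n * (2 + l)))
    letI a : ℝ := 3 - (1 + 1 / n)                         -- up-move bid-price increment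
    letI b : ℝ := (1 - l) * (1 + 1 / (n + 1)) - (1 + 1 / n)  -- down-move bid-price increment
    letI θs : ℝ := w * ((1 + l) / (l + 1 / n)) * (1 / (1 + l) + q₁ / n)
    (0 < w + θs * a ∧ 0 < w + θs * b) ∧
      ∀ θ : ℝ, 0 < w + θ * a → 0 < w + θ * b →
        p * Real.log (w + θ * a) + (1 - p) * Real.log (w + θ * b) ≤
          p * Real.log (w + θs * a) + (1 - p) * Real.log (w + θs * b) := by
  obtain ⟨hl0, hl1⟩ := hl
  obtain ⟨hq0, hq1⟩ := hq
  obtain ⟨N, hNdef, hN⟩ : ∃ N : ℝ, (n : ℝ) = N ∧ 1 ≤ N := ⟨n, rfl, by exact_mod_cast hn⟩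
  rw [hNdef]
  have hN0 : (0 : ℝ) < N := by linarith
  have hN1 : (0 : ℝ) < N + 1 := by linarith
  have h1l : (0 : ℝ) < 1 + l := by linarith
  have h1nl : (0 : ℝ) < 1 + N * l := by nlinarith
  have hden2 : (0 : ℝ) < 1 + 2 * l + N * (2 + l) := by nlinarith
  have hlN : (0 : ℝ) < l + 1 / N := by positivity
  have hNe0 : N ≠ 0 := hN0.ne'
  have hNe1 : N + 1 ≠ 0 := hN1.ne'
  have h1le : (1 : ℝ) + l ≠ 0 := h1l.ne'
  have h1nle : (1 : ℝ) + N * l ≠ 0 := h1nl.ne'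
  have hden2e : (1 : ℝ) + 2 * l + N * (2 + l) ≠ 0 := hden2.ne'
  have hlNe : l + 1 / N ≠ 0 := hlN.ne'
  have hd : (0 : ℝ) < 1 + 4 * l + 3 * l ^ 2 := by nlinarith
  have hq1' : q₁ * (1 + 4 * l + 3 * l ^ 2) < 1 - l := (lt_div_iff₀ hd).mp hq1
  -- key positive quantity D
  have hD : 0 < N ^ 2 * (1 - l) - q₁ * (1 + l) * (1 + N * (N + 2) * l) := by
    have hK : (1 + N * (N + 2) * l) ≤ N ^ 2 * (1 + 3 * l) := by nlinarith
    have hq1'' : q₁ * (1 + l) * (1 + 3 * l) < 1 - l := by nlinarith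
    nlinarith [mul_le_mul_of_nonneg_left hK (mul_pos hq0 h1l).le,
      mul_lt_mul_of_pos_left hq1'' (by positivity : (0:ℝ) < N ^ 2)]
  have hNum : 0 < (1 + N * (2 + N) * l) * ((2 * N - 1) * q₁ * (1 + l) + N ^ 2 * (2 + l)) := by
    have f1 : (0:ℝ) < 1 + N * (2 + N) * l := by nlinarith
    have f2 : (0:ℝ) < (2 * N - 1) * q₁ * (1 + l) + N ^ 2 * (2 + l) := by nlinarith
    exact mul_pos f1 f2
  have hDen : 0 < N ^ 2 * (1 + N * l) * (1 + 2 * l + N * (2 + l)) := by positivity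
  have hp : 0 ≤ (1 + N * (2 + N) * l) * ((2 * N - 1) * q₁ * (1 + l) + N ^ 2 * (2 + l)) /
      (N ^ 2 * (1 + N * l) * (1 + 2 * l + N * (2 + l))) := le_of_lt (div_pos hNum hDen)
  have hp1 : (1 + N * (2 + N) * l) * ((2 * N - 1) * q₁ * (1 + l) + N ^ 2 * (2 + l)) /
      (N ^ 2 * (1 + N * l) * (1 + 2 * l + N * (2 + l))) ≤ 1 := by
    rw [div_le_one hDen]
    nlinarith [mul_nonneg (by linarith : (0:ℝ) ≤ 2 * N - 1) hD.le]
  have hY1 : 0 < w + (w * ((1 + l) / (l + 1 / N)) * (1 / (1 + l) + q₁ / N)) * (3 - (1 + 1 / N)) := by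
    have e1 : w + (w * ((1 + l) / (l + 1 / N)) * (1 / (1 + l) + q₁ / N)) * (3 - (1 + 1 / N)) =
        w * (N * (1 + N * l) + (2 * N - 1) * (N + q₁ * (1 + l))) / (N * (1 + N * l)) := by
      field_simp
      ring
    rw [e1]
    exact div_pos (mul_pos hw (by nlinarith [mul_pos hq0 h1l])) (by positivity)
  have hY2 : 0 < w + (w * ((1 + l) / (l + 1 / N)) * (1 / (1 + l) + q₁ / N)) *
      ((1 - l) * (1 + 1 / (N + 1)) - (1 + 1 / N)) := by
    have e2 : w + (w * ((1 + l) / (l + 1 / N)) * (1 / (1 + l) + q₁ / N)) *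
        ((1 - l) * (1 + 1 / (N + 1)) - (1 + 1 / N)) =
        w * (N ^ 2 * (1 - l) - q₁ * (1 + l) * (1 + N * (N + 2) * l)) /
          (N * (N + 1) * (1 + N * l)) := by
      field_simp
      ring
    rw [e2]
    exact div_pos (mul_pos hw hD) (by positivity)
  have hfoc : ((1 + N * (2 + N) * l) * ((2 * N - 1) * q₁ * (1 + l) + N ^ 2 * (2 + l)) /
      (N ^ 2 * (1 + N * l) * (1 + 2 * l + N * (2 + l)))) * (3 - (1 + 1 / N)) *
      (w + (w * ((1 + l) / (l + 1 / N)) * (1 / (1 + l) + q₁ / N)) *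
        ((1 - l) * (1 + 1 / (N + 1)) - (1 + 1 / N))) +
      (1 - (1 + N * (2 + N) * l) * ((2 * N - 1) * q₁ * (1 + l) + N ^ 2 * (2 + l)) /
      (N ^ 2 * (1 + N * l) * (1 + 2 * l + N * (2 + l)))) *
      ((1 - l) * (1 + 1 / (N + 1)) - (1 + 1 / N)) *
      (w + (w * ((1 + l) / (l + 1 / N)) * (1 / (1 + l) + q₁ / N)) * (3 - (1 + 1 / N))) = 0 := by
    field_simp
    ring
  exact ⟨⟨hY1, hY2⟩, fun θ h1 h2 => log_opt_aux _ _ _ _ _ _ hp hp1 hY1 hY2 hfoc h1 h2⟩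
end
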